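/- For every integer k ≥ 1 there exists N_k ∈ ℕ such that the sequence n ↦ (log^{(k)} n)^n, n ≥ N_k, is log-convex, where log^{(k)} is the k-fold iterated logarithm. -/

import Mathlib

open Real Finset

noncomputable def Qf (m : ℕ) (x : ℝ) : ℝ := ∏ i ∈ Finset.range m, Real.log^[i] x

noncomputable def Sf (m : ℕ) (x : ℝ) : ℝ := ∑ i ∈ Finset.range m, (Qf (i+1) x)⁻¹

noncomputable def Tw : ℕ → ℝ
  | 0 => 2
  | m+1 => Real.exp (Tw m)

lemma Tw_ge_two (m : ℕ) : 2 ≤ Tw m := by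
  induction m with
  | zero => exact le_refl _
  | succ m ih =>
    have h := Real.add_one_le_exp (Tw m)
    show (2:ℝ) ≤ Real.exp (Tw m)
    linarith

lemma Tw_mono : Monotone Tw := by
  apply monotone_nat_of_le_succ
  intro m
  have h := Real.add_one_le_exp (Tw m)
  show Tw m ≤ Real.exp (Tw m)
  linarith

lemma iter_log_ge (m : ℕ) : ∀ i ≤ m, ∀ x : ℝ, Tw m ≤ x → Tw (m - i) ≤ Real.log^[i] x := by
  intro i
  induction i with
  | zero => intro _ x hx; simpa using hx
  | succ i ih =>
    intro him x hx
    have hi : i ≤ m := by omega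
    have h1 : Tw (m - i) ≤ Real.log^[i] x := ih hi x hx
    have hmi : m - i = (m - (i+1)) + 1 := by omega
    rw [Function.iterate_succ_apply']
    have h2 : Real.exp (Tw (m - (i+1))) ≤ Real.log^[i] x := by
      rw [hmi] at h1; simpa [Tw] using h1
    calc Tw (m - (i+1)) = Real.log (Real.exp (Tw (m - (i+1)))) := (Real.log_exp _).symm
      _ ≤ Real.log (Real.log^[i] x) := Real.log_le_log (Real.exp_pos _) h2

lemma iter_log_ge_two (m : ℕ) (i : ℕ) (hi : i ≤ m) (x : ℝ) (hx : Tw m ≤ x) :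
    2 ≤ Real.log^[i] x := le_trans (Tw_ge_two _) (iter_log_ge m i hi x hx)

lemma Qf_pos (m : ℕ) (x : ℝ) (h : ∀ i < m, 0 < Real.log^[i] x) : 0 < Qf m x :=
  Finset.prod_pos fun i hi => h i (Finset.mem_range.mp hi)

lemma hasDerivAt_iter_log (m : ℕ) (x : ℝ) (h : ∀ i < m, 0 < Real.log^[i] x) :
    HasDerivAt (Real.log^[m]) (Qf m x)⁻¹ x := by
  induction m with
  | zero => simpa [Qf] using hasDerivAt_id x
  | succ m ih =>
    have hm : ∀ i < m, 0 < Real.log^[i] x := fun i hi => h i (by omega)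
    have h1 := (Real.hasDerivAt_log (ne_of_gt (h m (by omega)))).comp x (ih hm)
    rw [show Real.log^[m+1] = Real.log ∘ Real.log^[m] from Function.iterate_succ' _ _]
    refine h1.congr_deriv (Eq.symm ?_)
    rw [Qf, Finset.prod_range_succ, ← Qf, mul_inv]
    ring

lemma hasDerivAt_Qf (m : ℕ) (x : ℝ) (h : ∀ i < m, 0 < Real.log^[i] x) :
    HasDerivAt (Qf m) (Qf m x * Sf m x) x := by
  induction m with
  | zero =>
    have h0 : Qf 0 = fun _ : ℝ => (1:ℝ) := by funext y; simp [Qf]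
    rw [h0]
    simpa [Qf, Sf] using hasDerivAt_const x (1:ℝ)
  | succ m ih =>
    have hm : ∀ i < m, 0 < Real.log^[i] x := fun i hi => h i (by omega)
    have hQ : Qf (m+1) = fun y => Qf m y * Real.log^[m] y := by
      funext y; rw [Qf, Finset.prod_range_succ, ← Qf]
    have h1 := (ih hm).mul (hasDerivAt_iter_log m x hm)
    rw [hQ]
    refine h1.congr_deriv (Eq.symm ?_)
    have hQm : Qf m x ≠ 0 := ne_of_gt (Qf_pos m x hm)
    have hLm : Real.log^[m] x ≠ 0 := ne_of_gt (h m (by omega))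
    have hQm1 : Qf (m+1) x = Qf m x * Real.log^[m] x := by
      rw [Qf, Finset.prod_range_succ, ← Qf]
    have hS : Sf (m+1) x = Sf m x + (Qf (m+1) x)⁻¹ := by
      rw [Sf, Finset.sum_range_succ, ← Sf]
    rw [hQm1] at hS
    show Qf m x * Real.log^[m] x * Sf (m+1) x
        = Qf m x * Sf m x * Real.log^[m] x + Qf m x * (Qf m x)⁻¹
    rw [hS]
    field_simp

lemma Qf_ge (m i : ℕ) (hi : i ≤ m) (x : ℝ) (hx : Tw m ≤ x) :
    2 ^ i * x ≤ Qf (i+1) x := by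
  induction i with
  | zero => simp [Qf]
  | succ i ih =>
    have h1 : 2 ^ i * x ≤ Qf (i+1) x := ih (by omega)
    have h2 : (2:ℝ) ≤ Real.log^[i+1] x := iter_log_ge_two m (i+1) hi x hx
    have hxpos : (0:ℝ) < x := lt_of_lt_of_le (by linarith [Tw_ge_two m]) hx
    have hQpos : 0 < Qf (i+1) x := lt_of_lt_of_le (by positivity) h1
    calc 2 ^ (i+1) * x = (2 ^ i * x) * 2 := by ring
      _ ≤ Qf (i+1) x * Real.log^[i+1] x := by
          apply mul_le_mul h1 h2 (by norm_num) (le_of_lt hQpos)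
      _ = Qf (i+2) x := by rw [eq_comm, Qf, Finset.prod_range_succ, ← Qf]

lemma xS_le_two (m : ℕ) (x : ℝ) (hx : Tw m ≤ x) : x * Sf (m+1) x ≤ 2 := by
  have hxpos : (0:ℝ) < x := lt_of_lt_of_le (by linarith [Tw_ge_two m]) hx
  rw [Sf, Finset.mul_sum]
  calc (∑ i ∈ Finset.range (m+1), x * (Qf (i+1) x)⁻¹)
      ≤ ∑ i ∈ Finset.range (m+1), (1/2:ℝ) ^ i := by
        apply Finset.sum_le_sum
        intro i hi
        have hi' : i ≤ m := Nat.lt_succ_iff.mp (Finset.mem_range.mp hi)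
        have hQ := Qf_ge m i hi' x hx
        have h2pos : (0:ℝ) < 2 ^ i * x := by positivity
        have hinv : (Qf (i+1) x)⁻¹ ≤ (2 ^ i * x)⁻¹ := inv_anti₀ h2pos hQ
        calc x * (Qf (i+1) x)⁻¹ ≤ x * (2 ^ i * x)⁻¹ :=
              mul_le_mul_of_nonneg_left hinv (le_of_lt hxpos)
          _ = (1/2:ℝ) ^ i := by field_simp; rw [← mul_pow]; norm_num
    _ ≤ 2 := sum_geometric_two_le _

theorem iterated_log_pow_logconvex (k : ℕ) (hk : 1 ≤ k) :
    ∃ N : ℕ, ∀ n : ℕ, N < n →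
      ((Real.log^[k] (n : ℝ)) ^ n) ^ 2
        ≤ (Real.log^[k] ((n - 1 : ℕ) : ℝ)) ^ (n - 1)
            * (Real.log^[k] ((n + 1 : ℕ) : ℝ)) ^ (n + 1) := by
  set A : ℝ := Tw (k+2) with hAdef
  have hA2 : (2:ℝ) ≤ A := Tw_ge_two _
  have hpos : ∀ y:ℝ, A ≤ y → ∀ i, i < k+2 → 0 < Real.log^[i] y := by
    intro y hy i hi
    exact lt_of_lt_of_le two_pos (iter_log_ge_two (k+2) i (by omega) y hy)
  -- the convex auxiliary function and its derivatives
  set g : ℝ → ℝ := fun x => x * Real.log^[k+1] x with hgdef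
  set g1 : ℝ → ℝ := fun x => Real.log^[k+1] x + x * (Qf (k+1) x)⁻¹ with hg1def
  set g2 : ℝ → ℝ := fun x => (2 - x * Sf (k+1) x) * (Qf (k+1) x)⁻¹ with hg2def
  have hd1 : ∀ y:ℝ, A ≤ y → HasDerivAt g (g1 y) y := by
    intro y hy
    have h := (hasDerivAt_id' (x := y)).mul
      (hasDerivAt_iter_log (k+1) y (fun i hi => hpos y hy i (by omega)))
    refine h.congr_deriv ?_
    simp only [hg1def, one_mul]
  have hd2 : ∀ y:ℝ, A ≤ y → HasDerivAt g1 (g2 y) y := by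
    intro y hy
    have hposy : ∀ i < k+1, 0 < Real.log^[i] y := fun i hi => hpos y hy i (by omega)
    have hQpos : 0 < Qf (k+1) y := Qf_pos _ _ hposy
    have h1 := hasDerivAt_iter_log (k+1) y hposy
    have h2 := (hasDerivAt_id' (x := y)).mul
      ((hasDerivAt_Qf (k+1) y hposy).inv (ne_of_gt hQpos))
    have h3 := h1.add h2
    refine h3.congr_deriv (Eq.symm ?_)
    have hQne : Qf (k+1) y ≠ 0 := ne_of_gt hQpos
    simp only [hg2def, Pi.inv_apply]
    field_simp
    ring
  have hconv : ConvexOn ℝ (Set.Ici A) g := by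
    apply convexOn_of_hasDerivWithinAt2_nonneg (convex_Ici A) (f' := g1) (f'' := g2)
    · intro y hy
      exact (hd1 y hy).continuousAt.continuousWithinAt
    · intro y hy
      have hy' : A < y := by simpa [interior_Ici] using hy
      exact (hd1 y hy'.le).hasDerivWithinAt
    · intro y hy
      have hy' : A < y := by simpa [interior_Ici] using hy
      exact (hd2 y hy'.le).hasDerivWithinAt
    · intro y hy
      have hy' : A < y := by simpa [interior_Ici] using hy
      have hTk : Tw k ≤ y := le_trans (Tw_mono (by omega : k ≤ k+2)) hy'.le
      have hxS : y * Sf (k+1) y ≤ 2 := xS_le_two k y hTk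
      have hQpos : 0 < Qf (k+1) y :=
        Qf_pos _ _ (fun i hi => hpos y hy'.le i (by omega))
      simp only [hg2def]
      have : 0 ≤ 2 - y * Sf (k+1) y := by linarith
      positivity
  -- choose N
  refine ⟨⌈A⌉₊ + 1, ?_⟩
  intro n hn
  have hn2 : 2 ≤ n := by
    have := Nat.le_ceil A
    omega
  have hcn : ((⌈A⌉₊ : ℝ) + 1) ≤ (n:ℝ) := by exact_mod_cast hn.le
  have hAn1 : A ≤ (n:ℝ) - 1 := by
    have := Nat.le_ceil A
    linarith
  have hAn : A ≤ (n:ℝ) := by linarith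
  have hAn2 : A ≤ (n:ℝ) + 1 := by linarith
  -- midpoint convexity
  have hmid := hconv.2 (Set.mem_Ici.mpr hAn1) (Set.mem_Ici.mpr hAn2)
    (by norm_num : (0:ℝ) ≤ 1/2) (by norm_num : (0:ℝ) ≤ 1/2) (by norm_num)
  have harg : (1/2:ℝ) • ((n:ℝ) - 1) + (1/2:ℝ) • ((n:ℝ) + 1) = (n:ℝ) := by
    simp [smul_eq_mul]; ring
  rw [harg] at hmid
  simp only [smul_eq_mul] at hmid
  have h2g : 2 * g (n:ℝ) ≤ g ((n:ℝ) - 1) + g ((n:ℝ) + 1) := by linarith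
  -- exponentiation
  have key : ∀ y:ℝ, A ≤ y → ∀ p:ℕ,
      (Real.log^[k] y) ^ p = Real.exp ((p:ℝ) * Real.log^[k+1] y) := by
    intro y hy p
    have hLpos : 0 < Real.log^[k] y := hpos y hy k (by omega)
    rw [show Real.log^[k+1] y = Real.log (Real.log^[k] y) from
      Function.iterate_succ_apply' _ _ _]
    rw [Real.exp_nat_mul, Real.exp_log hLpos]
  have hcast1 : ((n - 1 : ℕ) : ℝ) = (n:ℝ) - 1 := by
    have : (1:ℕ) ≤ n := by omega
    push_cast [this]; ring
  have hcast2 : ((n + 1 : ℕ) : ℝ) = (n:ℝ) + 1 := by push_cast; ring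
  simp only [hgdef] at h2g
  rw [hcast1, hcast2, key (n:ℝ) hAn n, key _ hAn1 (n-1), key _ hAn2 (n+1), sq,
    ← Real.exp_add, ← Real.exp_add]
  apply Real.exp_le_exp.mpr
  rw [hcast1, hcast2]
  linarith
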